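/- Let R be a cube in ℝ^d, let v be a doubling weight, and let f ∈ L¹(R, v dx). Then for every t > (1/v(R))∫_R |f| v there exist a function g, functions h_i, and a collection {P_i} of pairwise disjoint dyadic subcubes of R such that: f = g + Σ_i h_i; |g(x)| ≤ C t for almost every x ∈ R with C depending only on d and the doubling constant; each h_i is supported on P_i and satisfies ∫_{P_i} h_i v = 0; moreover t ≤ (1/v(P_i))∫_{P_i} |f| v ≤ γt for a constant γ = γ(d, v) > 1, and |f(x)| ≤ t for a.e. x ∈ R \ ∪_i P_i. -/

import Mathlib

open MeasureTheory

noncomputable section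

/-- The axis-parallel cube centered at `x` with "radius" `r = √d · ℓ(Q)/2`,
i.e. side length `2r/√d`. -/
def cube (d : ℕ) (x : EuclideanSpace ℝ (Fin d)) (r : ℝ) :
    Set (EuclideanSpace ℝ (Fin d)) :=
  {y | ∀ i, |y i - x i| ≤ r / Real.sqrt d}

/-- Average `(1/|Q|) ∫_Q w` over the cube `Q(x,r)`. -/
def cubeAvg {d : ℕ} (x : EuclideanSpace ℝ (Fin d)) (r : ℝ)
    (w : EuclideanSpace ℝ (Fin d) → ℝ) : ℝ :=
  (volume (cube d x r)).toReal⁻¹ * ∫ y in cube d x r, w y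

/-- Weighted average `(1/u(Q)) ∫_Q v·u` over the cube `Q(x,r)`. -/
def cubeAvgW {d : ℕ} (x : EuclideanSpace ℝ (Fin d)) (r : ℝ)
    (u v : EuclideanSpace ℝ (Fin d) → ℝ) : ℝ :=
  (∫ y in cube d x r, u y)⁻¹ * ∫ y in cube d x r, v y * u y

/-- Essential infimum of `w` over the cube `Q(x,r)`. -/
def cubeInf {d : ℕ} (x : EuclideanSpace ℝ (Fin d)) (r : ℝ)
    (w : EuclideanSpace ℝ (Fin d) → ℝ) : ℝ :=
  essInf w (volume.restrict (cube d x r))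

/-- Essential supremum of `w` over the cube `Q(x,r)`. -/
def cubeSup {d : ℕ} (x : EuclideanSpace ℝ (Fin d)) (r : ℝ)
    (w : EuclideanSpace ℝ (Fin d) → ℝ) : ℝ :=
  essSup w (volume.restrict (cube d x r))

/-- `ρ` is a critical radius function with constants `C₀ > 0` and `N₀ ≥ 1`:
`C₀⁻¹ ρ(x)(1+|x−y|/ρ(x))^{−N₀} ≤ ρ(y) ≤ C₀ ρ(x)(1+|x−y|/ρ(x))^{N₀/(N₀+1)}`. -/
def IsCRF {d : ℕ} (ρ : EuclideanSpace ℝ (Fin d) → ℝ) (C₀ N₀ : ℝ) : Prop :=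
  (∀ x, 0 < ρ x) ∧
    ∀ x y, C₀⁻¹ * ρ x * (1 + dist x y / ρ x) ^ (-N₀) ≤ ρ y ∧
      ρ y ≤ C₀ * ρ x * (1 + dist x y / ρ x) ^ (N₀ / (N₀ + 1))

/-- A weight: a locally integrable function which is positive a.e. -/
def IsWeight {d : ℕ} (w : EuclideanSpace ℝ (Fin d) → ℝ) : Prop :=
  LocallyIntegrable w volume ∧ ∀ᵐ x ∂(volume : Measure (EuclideanSpace ℝ (Fin d))), 0 < w x

/-- The class `A₁^{ρ,θ}` with explicit constant `C`. -/
def A1C {d : ℕ} (ρ : EuclideanSpace ℝ (Fin d) → ℝ) (θ C : ℝ)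
    (w : EuclideanSpace ℝ (Fin d) → ℝ) : Prop :=
  ∀ x r, 0 < r → cubeAvg x r w ≤ C * (1 + r / ρ x) ^ θ * cubeInf x r w

/-- The class `A₁^{ρ,θ}`. -/
def memA1 {d : ℕ} (ρ : EuclideanSpace ℝ (Fin d) → ℝ) (θ : ℝ)
    (w : EuclideanSpace ℝ (Fin d) → ℝ) : Prop :=
  ∃ C > 0, A1C ρ θ C w

/-- The class `A₁^ρ = ∪_{θ ≥ 0} A₁^{ρ,θ}`. -/
def A1 {d : ℕ} (ρ : EuclideanSpace ℝ (Fin d) → ℝ)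
    (w : EuclideanSpace ℝ (Fin d) → ℝ) : Prop :=
  ∃ θ ≥ 0, memA1 ρ θ w

/-- The class `A_p^{ρ,θ}` (for `1 < p < ∞`) with explicit constant `C`;
here `p' = p/(p-1)`. -/
def ApC {d : ℕ} (ρ : EuclideanSpace ℝ (Fin d) → ℝ) (p θ C : ℝ)
    (w : EuclideanSpace ℝ (Fin d) → ℝ) : Prop :=
  ∀ x r, 0 < r →
    (cubeAvg x r w) ^ (1 / p) *
      (cubeAvg x r fun y => w y ^ (1 - p / (p - 1))) ^ (1 - 1 / p) ≤
        C * (1 + r / ρ x) ^ θ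

/-- The class `A_p^{ρ,θ}` for `1 < p < ∞`. -/
def memAp {d : ℕ} (ρ : EuclideanSpace ℝ (Fin d) → ℝ) (p θ : ℝ)
    (w : EuclideanSpace ℝ (Fin d) → ℝ) : Prop :=
  ∃ C > 0, ApC ρ p θ C w

/-- The class `A_p^ρ = ∪_{θ ≥ 0} A_p^{ρ,θ}` for `1 < p < ∞`. -/
def Ap {d : ℕ} (ρ : EuclideanSpace ℝ (Fin d) → ℝ) (p : ℝ)
    (w : EuclideanSpace ℝ (Fin d) → ℝ) : Prop :=
  ∃ θ ≥ 0, memAp ρ p θ w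

/-- The class `A_∞^ρ = ∪_{p > 1} A_p^ρ`. -/
def Ainf {d : ℕ} (ρ : EuclideanSpace ℝ (Fin d) → ℝ)
    (w : EuclideanSpace ℝ (Fin d) → ℝ) : Prop :=
  ∃ p, 1 < p ∧ Ap ρ p w

/-- The reverse Hölder class `RH_s^{ρ,θ}` with explicit constant `C`. -/
def RHC {d : ℕ} (ρ : EuclideanSpace ℝ (Fin d) → ℝ) (s θ C : ℝ)
    (w : EuclideanSpace ℝ (Fin d) → ℝ) : Prop :=
  ∀ x r, 0 < r →
    (cubeAvg x r fun y => w y ^ s) ^ (1 / s) ≤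
      C * (1 + r / ρ x) ^ θ * cubeAvg x r w

/-- The reverse Hölder class `RH_s^{ρ,θ}`. -/
def memRH {d : ℕ} (ρ : EuclideanSpace ℝ (Fin d) → ℝ) (s θ : ℝ)
    (w : EuclideanSpace ℝ (Fin d) → ℝ) : Prop :=
  ∃ C > 0, RHC ρ s θ C w

/-- The class `RH_s^ρ = ∪_{θ ≥ 0} RH_s^{ρ,θ}`. -/
def RH {d : ℕ} (ρ : EuclideanSpace ℝ (Fin d) → ℝ) (s : ℝ)
    (w : EuclideanSpace ℝ (Fin d) → ℝ) : Prop :=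
  ∃ θ ≥ 0, memRH ρ s θ w

/-- The class `RH_∞^{ρ,θ}` with explicit constant `C`. -/
def RHinfC {d : ℕ} (ρ : EuclideanSpace ℝ (Fin d) → ℝ) (θ C : ℝ)
    (w : EuclideanSpace ℝ (Fin d) → ℝ) : Prop :=
  ∀ x r, 0 < r → cubeSup x r w ≤ C * (1 + r / ρ x) ^ θ * cubeAvg x r w

/-- The class `RH_∞^{ρ,θ}`. -/
def memRHinf {d : ℕ} (ρ : EuclideanSpace ℝ (Fin d) → ℝ) (θ : ℝ)
    (w : EuclideanSpace ℝ (Fin d) → ℝ) : Prop :=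
  ∃ C > 0, RHinfC ρ θ C w

/-- The class `RH_∞^ρ = ∪_{θ ≥ 0} RH_∞^{ρ,θ}`. -/
def RHinf {d : ℕ} (ρ : EuclideanSpace ℝ (Fin d) → ℝ)
    (w : EuclideanSpace ℝ (Fin d) → ℝ) : Prop :=
  ∃ θ ≥ 0, memRHinf ρ θ w

/-- The weighted class `A_p^{ρ,θ}(u)` (for `1 < p < ∞`) with explicit constant `C`. -/
def ApWC {d : ℕ} (ρ u : EuclideanSpace ℝ (Fin d) → ℝ) (p θ C : ℝ)
    (v : EuclideanSpace ℝ (Fin d) → ℝ) : Prop :=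
  ∀ x r, 0 < r →
    (cubeAvgW x r u v) ^ (1 / p) *
      (cubeAvgW x r u fun y => v y ^ (1 - p / (p - 1))) ^ (1 - 1 / p) ≤
        C * (1 + r / ρ x) ^ θ

/-- The weighted class `A_p^{ρ,θ}(u)` for `1 < p < ∞`. -/
def memApW {d : ℕ} (ρ u : EuclideanSpace ℝ (Fin d) → ℝ) (p θ : ℝ)
    (v : EuclideanSpace ℝ (Fin d) → ℝ) : Prop :=
  ∃ C > 0, ApWC ρ u p θ C v

/-- The weighted class `A_p^ρ(u) = ∪_{θ ≥ 0} A_p^{ρ,θ}(u)` for `1 < p < ∞`. -/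
def ApW {d : ℕ} (ρ u : EuclideanSpace ℝ (Fin d) → ℝ) (p : ℝ)
    (v : EuclideanSpace ℝ (Fin d) → ℝ) : Prop :=
  ∃ θ ≥ 0, memApW ρ u p θ v

/-- The weighted class `A₁^{ρ,θ}(u)`. -/
def memA1W {d : ℕ} (ρ u : EuclideanSpace ℝ (Fin d) → ℝ) (θ : ℝ)
    (v : EuclideanSpace ℝ (Fin d) → ℝ) : Prop :=
  ∃ C > 0, ∀ x r, 0 < r → cubeAvgW x r u v ≤ C * (1 + r / ρ x) ^ θ * cubeInf x r v

/-- The weighted class `A₁^ρ(u)`. -/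
def A1W {d : ℕ} (ρ u : EuclideanSpace ℝ (Fin d) → ℝ)
    (v : EuclideanSpace ℝ (Fin d) → ℝ) : Prop :=
  ∃ θ ≥ 0, memA1W ρ u θ v

/-- The weighted class `A_∞^ρ(u) = ∪_{p > 1} A_p^ρ(u)`. -/
def AinfW {d : ℕ} (ρ u : EuclideanSpace ℝ (Fin d) → ℝ)
    (v : EuclideanSpace ℝ (Fin d) → ℝ) : Prop :=
  ∃ p, 1 < p ∧ ApW ρ u p v

/-- Half-open axis-parallel box with lower corner `a` and side length `L`. -/
def box {d : ℕ} (a : EuclideanSpace ℝ (Fin d)) (L : ℝ) :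
    Set (EuclideanSpace ℝ (Fin d)) :=
  {y | ∀ i, a i ≤ y i ∧ y i < a i + L}

/-- A dyadic subcube of the box with corner `a` and side `L`, obtained by `k`
successive bisections of the sides. -/
def IsDyadicSubcube {d : ℕ} (a : EuclideanSpace ℝ (Fin d)) (L : ℝ)
    (P : Set (EuclideanSpace ℝ (Fin d))) : Prop :=
  ∃ (k : ℕ) (m : Fin d → ℕ), (∀ i, m i < 2 ^ k) ∧
    P = box (WithLp.toLp 2 fun i => a i + (m i : ℝ) * (L / 2 ^ k)) (L / 2 ^ k)

/-- `v` is doubling with constant `Cv`: `v(2Q) ≤ Cv · v(Q)` for all cubes `Q`. -/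
def IsDoubling {d : ℕ} (v : EuclideanSpace ℝ (Fin d) → ℝ) (Cv : ℝ) : Prop :=
  ∀ (x : EuclideanSpace ℝ (Fin d)) (r : ℝ), 0 < r →
    (∫ y in cube d x (2 * r), v y) ≤ Cv * ∫ y in cube d x r, v y

open Metric Set Filter
open scoped ENNReal NNReal Topology

namespace CZaux

variable {d : ℕ}

lemma abs_sub_apply_le_dist (x y : EuclideanSpace ℝ (Fin d)) (i : Fin d) :
    |x i - y i| ≤ dist x y := by
  rw [EuclideanSpace.dist_eq]
  have h1 : |x i - y i| = dist (x i) (y i) := (Real.dist_eq _ _).symm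
  rw [h1]
  have h2 : dist (x i) (y i) ^ 2 ≤ ∑ j, dist (x j) (y j) ^ 2 :=
    Finset.single_le_sum (f := fun j => dist (x j) (y j) ^ 2)
      (fun j _ => sq_nonneg _) (Finset.mem_univ i)
  calc dist (x i) (y i) = Real.sqrt (dist (x i) (y i) ^ 2) :=
        (Real.sqrt_sq dist_nonneg).symm
    _ ≤ _ := Real.sqrt_le_sqrt h2

lemma cube_subset_closedBall (hd : 0 < d) (x : EuclideanSpace ℝ (Fin d)) {r : ℝ}
    (hr : 0 ≤ r) : cube d x r ⊆ closedBall x r := by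
  intro y hy
  have hd0 : (0:ℝ) < Real.sqrt d := Real.sqrt_pos.2 (by exact_mod_cast hd)
  have key : ∀ i, dist (y i) (x i) ^ 2 ≤ (r / Real.sqrt d) ^ 2 := by
    intro i
    have := hy i
    have h0 : 0 ≤ r / Real.sqrt d := div_nonneg hr hd0.le
    rw [Real.dist_eq]
    exact pow_le_pow_left₀ (abs_nonneg _) this 2
  have : dist y x ≤ Real.sqrt (∑ _i : Fin d, (r / Real.sqrt d) ^ 2) := by
    rw [EuclideanSpace.dist_eq]
    exact Real.sqrt_le_sqrt (Finset.sum_le_sum fun i _ => key i)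
  refine mem_closedBall.2 (this.trans_eq ?_)
  rw [Finset.sum_const, Finset.card_univ, Fintype.card_fin, nsmul_eq_mul]
  rw [div_pow, Real.sq_sqrt (by positivity : (0:ℝ) ≤ (d:ℝ))]
  have hde : (d:ℝ) * (r ^ 2 / d) = r ^ 2 := by
    field_simp
  rw [hde]
  exact Real.sqrt_sq hr

lemma closedBall_subset_cube (hd : 0 < d) (x : EuclideanSpace ℝ (Fin d)) (ρ : ℝ) :
    closedBall x ρ ⊆ cube d x (Real.sqrt d * ρ) := by
  intro y hy i
  have hd0 : (0:ℝ) < Real.sqrt d := Real.sqrt_pos.2 (by exact_mod_cast hd)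
  have : Real.sqrt d * ρ / Real.sqrt d = ρ := by
    rw [mul_comm, mul_div_assoc, div_self hd0.ne', mul_one]
  rw [this]
  exact (abs_sub_apply_le_dist y x i).trans (mem_closedBall.1 hy)

lemma cube_mono (hd : 0 < d) (x : EuclideanSpace ℝ (Fin d)) {r r' : ℝ} (h : r ≤ r') :
    cube d x r ⊆ cube d x r' := by
  intro y hy i
  have hd0 : (0:ℝ) < Real.sqrt d := Real.sqrt_pos.2 (by exact_mod_cast hd)
  exact (hy i).trans (by gcongr)


lemma continuous_coord (i : Fin d) :
    Continuous (fun y : EuclideanSpace ℝ (Fin d) => y i) :=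
  (EuclideanSpace.proj i).continuous

lemma isClosed_cube (x : EuclideanSpace ℝ (Fin d)) (r : ℝ) : IsClosed (cube d x r) := by
  have : cube d x r = ⋂ i, {y : EuclideanSpace ℝ (Fin d) | |y i - x i| ≤ r / Real.sqrt d} := by
    ext y; simp [cube, mem_iInter]
  rw [this]
  exact isClosed_iInter fun i =>
    IsClosed.preimage (by fun_prop) (isClosed_Iic (a := r / Real.sqrt d))

lemma measurableSet_cube (x : EuclideanSpace ℝ (Fin d)) (r : ℝ) :
    MeasurableSet (cube d x r) := (isClosed_cube x r).measurableSet

lemma measurableSet_box (a : EuclideanSpace ℝ (Fin d)) (L : ℝ) :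
    MeasurableSet (box a L) := by
  have : box a L = ⋂ i, ((fun y : EuclideanSpace ℝ (Fin d) => y i) ⁻¹' (Ico (a i) (a i + L))) := by
    ext y; simp [box, mem_iInter, mem_Ico]
  rw [this]
  exact MeasurableSet.iInter fun i =>
    (continuous_coord i).measurable measurableSet_Ico

lemma isBounded_box (hd : 0 < d) (a : EuclideanSpace ℝ (Fin d)) (L : ℝ) :
    Bornology.IsBounded (box a L) := by
  rcases le_or_gt L 0 with hL | hL
  · have : box a L = ∅ := by
      ext y
      simp only [box, mem_setOf_eq, mem_empty_iff_false, iff_false, not_forall]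
      exact ⟨⟨0, hd⟩, fun h => absurd (h.1.trans_lt h.2) (by linarith)⟩
    simp [this]
  · apply Bornology.IsBounded.subset (isBounded_closedBall (x := a) (r := Real.sqrt d * L))
    intro y hy
    apply cube_subset_closedBall hd a (by positivity)
    intro i
    have h := hy i
    have hd0 : (0:ℝ) < Real.sqrt d := Real.sqrt_pos.2 (by exact_mod_cast hd)
    have : Real.sqrt d * L / Real.sqrt d = L := by
      rw [mul_comm, mul_div_assoc, div_self hd0.ne', mul_one]
    rw [this, abs_le]
    constructor <;> nlinarith [h.1, h.2]

lemma isBounded_cube (hd : 0 < d) (x : EuclideanSpace ℝ (Fin d)) (r : ℝ) :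
    Bornology.IsBounded (cube d x r) := by
  rcases le_or_gt 0 r with hr | hr
  · exact (isBounded_closedBall (x := x) (r := r)).subset (cube_subset_closedBall hd x hr)
  · have : cube d x r = ∅ := by
      ext y
      simp only [cube, mem_setOf_eq, mem_empty_iff_false, iff_false, not_forall, not_le]
      refine ⟨⟨0, hd⟩, lt_of_lt_of_le (div_neg_of_neg_of_pos hr ?_) (abs_nonneg _)⟩
      exact Real.sqrt_pos.2 (by exact_mod_cast hd)
    simp [this]

lemma volume_hyperplane (i : Fin d) (c : ℝ) :
    volume {y : EuclideanSpace ℝ (Fin d) | y i = c} = 0 := by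
  have hm : MeasurableSet {g : Fin d → ℝ | g i = c} := by
    have : {g : Fin d → ℝ | g i = c} = (fun g : Fin d → ℝ => g i) ⁻¹' {c} := rfl
    rw [this]
    exact (measurable_pi_apply i) (measurableSet_singleton c)
  have h := (PiLp.volume_preserving_ofLp (Fin d)).measure_preimage
    hm.nullMeasurableSet
  have e : (@WithLp.ofLp 2 (Fin d → ℝ)) ⁻¹' {g : Fin d → ℝ | g i = c}
      = {y : EuclideanSpace ℝ (Fin d) | y i = c} := rfl
  rw [e] at h
  rw [h, volume_pi]
  exact Measure.pi_hyperplane (fun _ => (volume : Measure ℝ)) i c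

lemma sqrt_d_half_div (hd : 0 < d) (u : ℝ) : Real.sqrt d * u / Real.sqrt d = u := by
  have hd0 : (0:ℝ) < Real.sqrt d := Real.sqrt_pos.2 (by exact_mod_cast hd)
  rw [mul_comm, mul_div_assoc, div_self hd0.ne', mul_one]

/-- The closed cube with the same corners as `box a L`. -/
def cbox (a : EuclideanSpace ℝ (Fin d)) (L : ℝ) : Set (EuclideanSpace ℝ (Fin d)) :=
  cube d (WithLp.toLp 2 fun i => a i + L / 2) (Real.sqrt d * (L / 2))

lemma mem_cbox (hd : 0 < d) {a : EuclideanSpace ℝ (Fin d)} {L : ℝ}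
    {y : EuclideanSpace ℝ (Fin d)} :
    y ∈ cbox a L ↔ ∀ i, a i ≤ y i ∧ y i ≤ a i + L := by
  unfold cbox cube
  simp only [mem_setOf_eq, sqrt_d_half_div hd, PiLp.toLp_apply]
  constructor
  · intro h i
    have := abs_le.1 (h i)
    constructor <;> [linarith [this.1]; linarith [this.2]]
  · intro h i
    rw [abs_le]
    constructor <;> [linarith [(h i).1]; linarith [(h i).2]]

lemma box_subset_cbox (hd : 0 < d) (a : EuclideanSpace ℝ (Fin d)) (L : ℝ) :
    box a L ⊆ cbox a L := fun y hy => (mem_cbox hd).2 fun i => ⟨(hy i).1, (hy i).2.le⟩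

def ctr (a : EuclideanSpace ℝ (Fin d)) (L : ℝ) : EuclideanSpace ℝ (Fin d) :=
  WithLp.toLp 2 fun i => a i + L / 2

lemma box_ae_eq_cbox (hd : 0 < d) (a : EuclideanSpace ℝ (Fin d)) (L : ℝ) :
    (box a L : Set (EuclideanSpace ℝ (Fin d))) =ᵐ[volume] cbox a L := by
  rw [MeasureTheory.ae_eq_set]
  refine ⟨by rw [diff_eq_empty.2 (box_subset_cbox hd a L)]; simp, ?_⟩
  refine measure_mono_null
    (?_ : _ ⊆ ⋃ i, {y : EuclideanSpace ℝ (Fin d) | y i = a i + L})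
    (measure_iUnion_null fun i => volume_hyperplane i (a i + L))
  rintro y ⟨hc, hb⟩
  have hc' := (mem_cbox hd).1 hc
  simp only [box, mem_setOf_eq, not_forall] at hb
  obtain ⟨i, hi⟩ := hb
  refine mem_iUnion.2 ⟨i, ?_⟩
  by_contra hne
  exact hi ⟨(hc' i).1, lt_of_le_of_ne (hc' i).2 hne⟩

lemma volume_box_pos (hd : 0 < d) (a : EuclideanSpace ℝ (Fin d)) {L : ℝ} (hL : 0 < L) :
    0 < volume (box a L) := by
  have hsub : ball (ctr a L) (L / 2) ⊆ box a L := by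
    intro y hy i
    have h1 : |y i - ctr a L i| ≤ dist y (ctr a L) := abs_sub_apply_le_dist _ _ i
    have hlt : |y i - (a i + L / 2)| < L / 2 := lt_of_le_of_lt h1 (mem_ball.1 hy)
    have := abs_lt.1 hlt
    constructor <;> [linarith [this.1]; linarith [this.2]]
  exact lt_of_lt_of_le (measure_ball_pos _ _ (by positivity)) (measure_mono hsub)

section Weight

variable {v : EuclideanSpace ℝ (Fin d) → ℝ}
  (hloc : LocallyIntegrable v volume)
  (hpos : ∀ᵐ x ∂(volume : Measure (EuclideanSpace ℝ (Fin d))), 0 < v x)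

include hloc in
lemma integrableOn_v (s : Set (EuclideanSpace ℝ (Fin d))) (hb : Bornology.IsBounded s) :
    IntegrableOn v s volume :=
  (hloc.integrableOn_isCompact hb.isCompact_closure).mono_set subset_closure

include hpos in
lemma setIntegral_v_nonneg (s : Set (EuclideanSpace ℝ (Fin d))) :
    0 ≤ ∫ y in s, v y :=
  integral_nonneg_of_ae (ae_restrict_of_ae (hpos.mono fun _ h => h.le))

include hloc hpos in
lemma setIntegral_v_pos {s : Set (EuclideanSpace ℝ (Fin d))} (hs : MeasurableSet s)
    (hb : Bornology.IsBounded s) (h0 : 0 < volume s) : 0 < ∫ y in s, v y := by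
  rw [setIntegral_pos_iff_support_of_nonneg_ae
    (ae_restrict_of_ae (hpos.mono fun _ h => h.le)) (integrableOn_v hloc s hb)]
  have h1 : volume (s \ Function.support v) = 0 := by
    refine measure_mono_null (?_ : _ ⊆ {x | ¬ 0 < v x}) (by simpa [ae_iff] using hpos)
    intro x hx
    simp only [mem_diff, Function.mem_support, not_not] at hx
    simp [hx.2]
  have h2 : volume s ≤ volume (Function.support v ∩ s) + volume (s \ Function.support v) := by
    refine (measure_mono ?_).trans (measure_union_le _ _)
    intro x hx
    by_cases h : x ∈ Function.support v
    · exact Or.inl ⟨h, hx⟩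
    · exact Or.inr ⟨hx, h⟩
  rw [h1, add_zero] at h2
  exact lt_of_lt_of_le h0 h2

end Weight

/-! ### Dyadic subcubes -/

section Dyadic

variable (a : EuclideanSpace ℝ (Fin d)) (L : ℝ)

/-- The dyadic subcube of `box a L` at generation `k` with index `m`. -/
def D (k : ℕ) (m : Fin d → ℕ) : Set (EuclideanSpace ℝ (Fin d)) :=
  box (WithLp.toLp 2 fun i => a i + (m i : ℝ) * (L / 2 ^ k)) (L / 2 ^ k)

lemma mem_D {k : ℕ} {m : Fin d → ℕ} {y : EuclideanSpace ℝ (Fin d)} :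
    y ∈ D a L k m ↔ ∀ i, a i + (m i : ℝ) * (L / 2 ^ k) ≤ y i ∧
      y i < a i + (m i : ℝ) * (L / 2 ^ k) + L / 2 ^ k := Iff.rfl

/-- The index of the generation-`k` dyadic cube containing `y`. -/
def idx (k : ℕ) (y : EuclideanSpace ℝ (Fin d)) : Fin d → ℕ :=
  fun i => ⌊(y i - a i) / (L / 2 ^ k)⌋₊

variable {L} (hL : 0 < L)
include hL

lemma D_subset_box {k : ℕ} {m : Fin d → ℕ} (hm : ∀ i, m i < 2 ^ k) :
    D a L k m ⊆ box a L := by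
  intro y hy i
  have hs : (0:ℝ) < L / 2 ^ k := by positivity
  have h := (mem_D a L).1 hy i
  have hm' : ((m i : ℝ) + 1) ≤ (2 : ℝ) ^ k := by
    have : (m i : ℝ) + 1 = ((m i + 1 : ℕ) : ℝ) := by push_cast; ring
    rw [this]
    exact_mod_cast hm i
  constructor
  · nlinarith [h.1, (Nat.cast_nonneg (m i) : (0:ℝ) ≤ (m i : ℝ))]
  · have : (m i : ℝ) * (L / 2 ^ k) + L / 2 ^ k ≤ L := by
      have h2 : ((m i : ℝ) + 1) * (L / 2 ^ k) ≤ (2:ℝ) ^ k * (L / 2 ^ k) := by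
        apply mul_le_mul_of_nonneg_right hm' hs.le
      have h3 : (2:ℝ) ^ k * (L / 2 ^ k) = L := by field_simp
      nlinarith
    nlinarith [h.2]

lemma D_halfparent (k : ℕ) (m : Fin d → ℕ) :
    D a L (k + 1) m ⊆ D a L k (fun i => m i / 2) := by
  intro y hy
  simp only [D, box, mem_setOf_eq] at hy ⊢
  intro i
  have h := hy i
  have hs : (0:ℝ) < L / 2 ^ (k+1) := by positivity
  have hdiv : ((m i / 2 : ℕ) : ℝ) * 2 ≤ (m i : ℝ) := by
    exact_mod_cast Nat.div_mul_le_self (m i) 2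
  have hdiv2 : (m i : ℝ) + 1 ≤ (((m i / 2 : ℕ) : ℝ) + 1) * 2 := by
    have : m i + 1 ≤ (m i / 2 + 1) * 2 := by omega
    exact_mod_cast this
  have hpw : L / 2 ^ k = 2 * (L / 2 ^ (k+1)) := by
    rw [pow_succ]; ring
  constructor
  · rw [hpw]; nlinarith [h.1]
  · rw [hpw]; nlinarith [h.2]

lemma D_anc {j k : ℕ} (hjk : j ≤ k) (m : Fin d → ℕ) :
    D a L k m ⊆ D a L j (fun i => m i / 2 ^ (k - j)) := by
  induction k, hjk using Nat.le_induction generalizing m with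
  | base => simpa using Set.Subset.rfl
  | succ k hjk ih =>
      refine (D_halfparent a hL k m).trans ((ih (fun i => m i / 2)).trans ?_)
      have : (fun i => m i / 2 / 2 ^ (k - j)) = fun i => m i / 2 ^ (k + 1 - j) := by
        funext i
        rw [Nat.div_div_eq_div_mul]
        congr 1
        rw [← pow_succ']
        congr 1
        omega
      rw [this]

lemma D_eq_of_mem {k : ℕ} {m m' : Fin d → ℕ} {y : EuclideanSpace ℝ (Fin d)}
    (h1 : y ∈ D a L k m) (h2 : y ∈ D a L k m') : m = m' := by
  funext i
  have hs : (0:ℝ) < L / 2 ^ k := by positivity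
  by_contra hne
  have ha := (mem_D a L).1 h1 i
  have hb := (mem_D a L).1 h2 i
  rcases Nat.lt_or_ge (m i) (m' i) with h | h
  · have : (m i : ℝ) + 1 ≤ (m' i : ℝ) := by exact_mod_cast h
    nlinarith [ha.2, hb.1]
  · have h' : m' i < m i := lt_of_le_of_ne h (Ne.symm ?_)
    · have : (m' i : ℝ) + 1 ≤ (m i : ℝ) := by exact_mod_cast h'
      nlinarith [hb.2, ha.1]
    · exact fun hc => hne (by rw [hc])

lemma idx_lt {k : ℕ} {y : EuclideanSpace ℝ (Fin d)} (hy : y ∈ box a L) (i : Fin d) :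
    idx a L k y i < 2 ^ k := by
  have hs : (0:ℝ) < L / 2 ^ k := by positivity
  have h := hy i
  have h0 : 0 ≤ (y i - a i) / (L / 2 ^ k) := by
    apply div_nonneg _ hs.le; linarith [h.1]
  have hlt : (y i - a i) / (L / 2 ^ k) < ((2 ^ k : ℕ) : ℝ) := by
    rw [div_lt_iff₀ hs]
    have he : ((2 ^ k : ℕ) : ℝ) * (L / 2 ^ k) = L := by push_cast; field_simp
    rw [he]
    linarith [h.2]
  exact (Nat.floor_lt h0).2 hlt

lemma mem_D_idx {k : ℕ} {y : EuclideanSpace ℝ (Fin d)} (hy : y ∈ box a L) :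
    y ∈ D a L k (idx a L k y) := by
  intro i
  have hs : (0:ℝ) < L / 2 ^ k := by positivity
  have h := hy i
  have h0 : 0 ≤ (y i - a i) / (L / 2 ^ k) := by
    apply div_nonneg _ hs.le; linarith [h.1]
  constructor
  · have hfl := Nat.floor_le h0
    have h1 : (idx a L k y i : ℝ) * (L / 2 ^ k) ≤ y i - a i := by
      have h2 := mul_le_mul_of_nonneg_right hfl hs.le
      have h3 : (y i - a i) / (L / 2 ^ k) * (L / 2 ^ k) = y i - a i := by field_simp
      calc (idx a L k y i : ℝ) * (L / 2 ^ k)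
          ≤ (y i - a i) / (L / 2 ^ k) * (L / 2 ^ k) := h2
        _ = y i - a i := h3
    linarith
  · have := Nat.lt_floor_add_one ((y i - a i) / (L / 2 ^ k))
    have h2 : y i - a i < ((idx a L k y i : ℝ) + 1) * (L / 2 ^ k) := by
      have h3 : y i - a i = (y i - a i) / (L / 2 ^ k) * (L / 2 ^ k) := by field_simp
      rw [h3]
      exact mul_lt_mul_of_pos_right this hs
    nlinarith

lemma idx_anc {j k : ℕ} (hjk : j ≤ k) {y : EuclideanSpace ℝ (Fin d)} (hy : y ∈ box a L) :
    (fun i => idx a L k y i / 2 ^ (k - j)) = idx a L j y :=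
  D_eq_of_mem a hL (D_anc a hL hjk _ (mem_D_idx a hL hy)) (mem_D_idx a hL hy)

omit hL in
lemma corner_eq (k : ℕ) (m : Fin d → ℕ) :
    D a L k m = box (WithLp.toLp 2 fun i => a i + (m i : ℝ) * (L / 2 ^ k)) (L / 2 ^ k) := rfl

end Dyadic

section Doubling

variable {v : EuclideanSpace ℝ (Fin d) → ℝ} {Cv : ℝ}

lemma volume_cube_pos (hd : 0 < d) (x : EuclideanSpace ℝ (Fin d)) {r : ℝ} (hr : 0 < r) :
    0 < volume (cube d x r) := by
  have hd0 : (0:ℝ) < Real.sqrt d := Real.sqrt_pos.2 (by exact_mod_cast hd)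
  have hsub : ball x (r / Real.sqrt d) ⊆ cube d x r := fun y hy i =>
    ((abs_sub_apply_le_dist y x i).trans (mem_ball.1 hy).le)
  exact lt_of_lt_of_le (measure_ball_pos _ _ (by positivity)) (measure_mono hsub)

lemma setIntegral_cube_pos (hd : 0 < d) (hloc : LocallyIntegrable v volume)
    (hpos : ∀ᵐ x ∂(volume : Measure (EuclideanSpace ℝ (Fin d))), 0 < v x) (x : EuclideanSpace ℝ (Fin d)) {r : ℝ} (hr : 0 < r) :
    0 < ∫ y in cube d x r, v y :=
  setIntegral_v_pos hloc hpos (measurableSet_cube x r) (isBounded_cube hd x r)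
    (volume_cube_pos hd x hr)

lemma one_le_Cv (hd : 0 < d) (hloc : LocallyIntegrable v volume)
    (hpos : ∀ᵐ x ∂(volume : Measure (EuclideanSpace ℝ (Fin d))), 0 < v x)
    (hdoub : ∀ (x : EuclideanSpace ℝ (Fin d)) (r : ℝ), 0 < r →
      (∫ y in cube d x (2 * r), v y) ≤ Cv * ∫ y in cube d x r, v y) : 1 ≤ Cv := by
  have h1 : (0:ℝ) < ∫ y in cube d (0 : EuclideanSpace ℝ (Fin d)) 1, v y :=
    setIntegral_cube_pos hd hloc hpos _ one_pos
  have h2 : (∫ y in cube d (0 : EuclideanSpace ℝ (Fin d)) 1, v y)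
      ≤ ∫ y in cube d (0 : EuclideanSpace ℝ (Fin d)) (2 * 1), v y := by
    apply setIntegral_mono_set (integrableOn_v hloc _ (isBounded_cube hd _ _))
      (ae_restrict_of_ae (hpos.mono fun _ h => h.le))
    exact HasSubset.Subset.eventuallyLE (cube_mono hd _ (by norm_num))
  have h3 := hdoub (0 : EuclideanSpace ℝ (Fin d)) 1 one_pos
  nlinarith

lemma doub_iter (hCv : 0 < Cv)
    (hdoub : ∀ (x : EuclideanSpace ℝ (Fin d)) (r : ℝ), 0 < r →
      (∫ y in cube d x (2 * r), v y) ≤ Cv * ∫ y in cube d x r, v y) (x : EuclideanSpace ℝ (Fin d)) (K : ℕ) {r : ℝ} (hr : 0 < r) :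
    (∫ y in cube d x (2 ^ K * r), v y) ≤ Cv ^ K * ∫ y in cube d x r, v y := by
  induction K with
  | zero => simp
  | succ K ih =>
      have h1 : (2:ℝ) ^ (K+1) * r = 2 * (2 ^ K * r) := by ring
      rw [h1]
      calc (∫ y in cube d x (2 * (2 ^ K * r)), v y)
          ≤ Cv * ∫ y in cube d x (2 ^ K * r), v y := hdoub x _ (by positivity)
        _ ≤ Cv * (Cv ^ K * ∫ y in cube d x r, v y) := by
            exact mul_le_mul_of_nonneg_left ih hCv.le
        _ = Cv ^ (K+1) * ∫ y in cube d x r, v y := by ring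

lemma sqrtd_le_pow : Real.sqrt d ≤ 2 ^ d := by
  rw [show ((2:ℝ) ^ d) = Real.sqrt ((2 ^ d) ^ 2) from (Real.sqrt_sq (by positivity)).symm]
  apply Real.sqrt_le_sqrt
  calc (d : ℝ) ≤ 2 ^ d := by exact_mod_cast Nat.le_of_lt (Nat.lt_two_pow_self (n := d))
    _ ≤ (2 ^ d) ^ 2 := by
        have h1 : (1:ℝ) ≤ 2 ^ d := one_le_pow₀ (by norm_num)
        nlinarith

lemma parent_le (hd : 0 < d) (a : EuclideanSpace ℝ (Fin d)) {L : ℝ} (hL : 0 < L)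
    (hloc : LocallyIntegrable v volume)
    (hpos : ∀ᵐ x ∂(volume : Measure (EuclideanSpace ℝ (Fin d))), 0 < v x)
    (hCv : 0 < Cv)
    (hdoub : ∀ (x : EuclideanSpace ℝ (Fin d)) (r : ℝ), 0 < r →
      (∫ y in cube d x (2 * r), v y) ≤ Cv * ∫ y in cube d x r, v y)
    (k : ℕ) (m : Fin d → ℕ) :
    (∫ y in D a L k (fun i => m i / 2), v y) ≤ Cv ^ 2 * ∫ y in D a L (k+1) m, v y := by
  set s : ℝ := L / 2 ^ (k+1) with hs_def
  have hs : 0 < s := by positivity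
  have hd0 : (0:ℝ) < Real.sqrt d := Real.sqrt_pos.2 (by exact_mod_cast hd)
  set b : EuclideanSpace ℝ (Fin d) := (WithLp.toLp 2 fun i => a i + (m i : ℝ) * s) with hb_def
  set c : EuclideanSpace ℝ (Fin d) := ctr b s with hc_def
  set r₀ : ℝ := Real.sqrt d * (s / 2) with hr0_def
  have hr₀ : 0 < r₀ := by positivity
  -- the child is a.e. equal to the centered cube
  have hchild : D a L (k+1) m = box b s := rfl
  have hcbox : cbox b s = cube d c r₀ := rfl
  have hint_child : (∫ y in D a L (k+1) m, v y) = ∫ y in cube d c r₀, v y := by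
    rw [hchild, setIntegral_congr_set (box_ae_eq_cbox hd b s), hcbox]
  -- the center belongs to the child, hence to the parent
  have hc_child : c ∈ D a L (k+1) m := by
    rw [hchild]
    intro i
    constructor
    · simp only [hc_def, ctr, PiLp.toLp_apply]; linarith
    · simp only [hc_def, ctr, PiLp.toLp_apply]; linarith
  have hc_parent : c ∈ D a L k (fun i => m i / 2) := D_halfparent a hL k m hc_child
  -- the parent is contained in the 4-fold dilate of the centered cube
  have hsub : D a L k (fun i => m i / 2) ⊆ cube d c (2 * (2 * r₀)) := by
    intro y hy i
    have h2s : L / 2 ^ k = 2 * s := by rw [hs_def, pow_succ]; ring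
    have hy' := (mem_D a L).1 hy i
    have hc' := (mem_D a L).1 hc_parent i
    rw [h2s] at hy' hc'
    have habs : |y i - c i| ≤ 2 * s := by
      rw [abs_le]; constructor <;> nlinarith [hy'.1, hy'.2, hc'.1, hc'.2]
    have hre : 2 * (2 * r₀) / Real.sqrt d = 2 * s := by
      rw [hr0_def]; field_simp
    rw [hre]
    exact habs
  have hnn : 0 ≤ᵐ[volume.restrict (cube d c (2 * (2 * r₀)))] v :=
    ae_restrict_of_ae (hpos.mono fun _ h => h.le)
  calc (∫ y in D a L k (fun i => m i / 2), v y)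
      ≤ ∫ y in cube d c (2 * (2 * r₀)), v y := by
        apply setIntegral_mono_set
          (integrableOn_v hloc _ (isBounded_cube hd _ _)) hnn
          (HasSubset.Subset.eventuallyLE hsub)
    _ ≤ Cv * ∫ y in cube d c (2 * r₀), v y := hdoub c _ (by positivity)
    _ ≤ Cv * (Cv * ∫ y in cube d c r₀, v y) :=
        mul_le_mul_of_nonneg_left (hdoub c _ hr₀) hCv.le
    _ = Cv ^ 2 * ∫ y in cube d c r₀, v y := by ring
    _ = Cv ^ 2 * ∫ y in D a L (k+1) m, v y := by rw [hint_child]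

end Doubling

section Density

variable {v : EuclideanSpace ℝ (Fin d) → ℝ} {Cv : ℝ}
  {W : EuclideanSpace ℝ (Fin d) → ℝ≥0}

/-- The measure `v dx`, via a measurable `ℝ≥0`-valued version `W` of `v`. -/
def mw (W : EuclideanSpace ℝ (Fin d) → ℝ≥0) : Measure (EuclideanSpace ℝ (Fin d)) :=
  volume.withDensity (fun y => (W y : ℝ≥0∞))

lemma mw_apply (hW : Measurable W)
    (hWv : ∀ᵐ y ∂(volume : Measure (EuclideanSpace ℝ (Fin d))), (W y : ℝ) = v y)
    (hloc : LocallyIntegrable v volume)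
    {s : Set (EuclideanSpace ℝ (Fin d))} (hs : MeasurableSet s)
    (hb : Bornology.IsBounded s) :
    mw W s = ENNReal.ofReal (∫ y in s, v y) := by
  rw [mw, withDensity_apply _ hs]
  have hint : IntegrableOn (fun y => (W y : ℝ)) s volume :=
    (integrableOn_v hloc s hb).congr (ae_restrict_of_ae (hWv.mono fun y h => h.symm))
  have h1 : ∫⁻ y in s, (W y : ℝ≥0∞) ∂volume
      = ∫⁻ y in s, ENNReal.ofReal ((W y : ℝ)) ∂volume := by
    apply lintegral_congr
    intro y
    rw [ENNReal.ofReal_coe_nnreal]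
  rw [h1, ← ofReal_integral_eq_lintegral_ofReal hint
    (ae_restrict_of_ae (Eventually.of_forall fun y => (W y).coe_nonneg))]
  congr 1
  exact integral_congr_ae (ae_restrict_of_ae hWv)

lemma mw_locallyFinite (hW : Measurable W)
    (hWv : ∀ᵐ y ∂(volume : Measure (EuclideanSpace ℝ (Fin d))), (W y : ℝ) = v y)
    (hloc : LocallyIntegrable v volume) :
    IsLocallyFiniteMeasure (mw W) := by
  constructor
  intro x
  refine ⟨closedBall x 1, closedBall_mem_nhds x one_pos, ?_⟩
  rw [mw_apply hW hWv hloc measurableSet_closedBall isBounded_closedBall]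
  exact ENNReal.ofReal_lt_top

lemma mw_doub (hd : 0 < d) (hW : Measurable W)
    (hWv : ∀ᵐ y ∂(volume : Measure (EuclideanSpace ℝ (Fin d))), (W y : ℝ) = v y)
    (hloc : LocallyIntegrable v volume) (hCv : 0 < Cv)
    (hdoub : ∀ (x : EuclideanSpace ℝ (Fin d)) (r : ℝ), 0 < r →
      (∫ y in cube d x (2 * r), v y) ≤ Cv * ∫ y in cube d x r, v y)
    (x : EuclideanSpace ℝ (Fin d)) (K : ℕ) {r : ℝ} (hr : 0 < r) :
    mw W (cube d x (2 ^ K * r)) ≤ (ENNReal.ofReal Cv) ^ K * mw W (cube d x r) := by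
  rw [mw_apply hW hWv hloc (measurableSet_cube _ _) (isBounded_cube hd _ _),
    mw_apply hW hWv hloc (measurableSet_cube _ _) (isBounded_cube hd _ _)]
  calc ENNReal.ofReal (∫ y in cube d x (2 ^ K * r), v y)
      ≤ ENNReal.ofReal (Cv ^ K * ∫ y in cube d x r, v y) :=
        ENNReal.ofReal_le_ofReal (doub_iter hCv hdoub x K hr)
    _ = (ENNReal.ofReal Cv) ^ K * ENNReal.ofReal (∫ y in cube d x r, v y) := by
        rw [ENNReal.ofReal_mul (by positivity), ENNReal.ofReal_pow hCv.le]

lemma cube_subset_cube_of_center (hd : 0 < d) {x c : EuclideanSpace ℝ (Fin d)}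
    {s S : ℝ} (hc : ∀ i, |x i - c i| ≤ s) :
    cube d x S ⊆ cube d c (S + Real.sqrt d * s) := by
  intro z hz i
  have hd0 : (0:ℝ) < Real.sqrt d := Real.sqrt_pos.2 (by exact_mod_cast hd)
  have h2 : (S + Real.sqrt d * s) / Real.sqrt d = S / Real.sqrt d + s := by
    field_simp
  rw [h2]
  calc |z i - c i| ≤ |z i - x i| + |x i - c i| := abs_sub_le _ _ _
    _ ≤ S / Real.sqrt d + s := add_le_add (hz i) (hc i)

lemma mw_vitali_doub (hd : 0 < d) (hW : Measurable W)
    (hWv : ∀ᵐ y ∂(volume : Measure (EuclideanSpace ℝ (Fin d))), (W y : ℝ) = v y)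
    (hloc : LocallyIntegrable v volume) (hCv : 0 < Cv)
    (hdoub : ∀ (x : EuclideanSpace ℝ (Fin d)) (r : ℝ), 0 < r →
      (∫ y in cube d x (2 * r), v y) ≤ Cv * ∫ y in cube d x r, v y)
    (x : EuclideanSpace ℝ (Fin d)) {r : ℝ} (hr : 0 < r) :
    mw W (closedBall x (3 * r)) ≤ (ENNReal.ofReal Cv) ^ (d + 3) * mw W (closedBall x r) := by
  have hd0 : (0:ℝ) < Real.sqrt d := Real.sqrt_pos.2 (by exact_mod_cast hd)
  set u : ℝ := Real.sqrt d * (3 * r) / 2 ^ (d + 3) with hu_def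
  have hu : 0 < u := by positivity
  have h1 : closedBall x (3 * r) ⊆ cube d x (2 ^ (d + 3) * u) := by
    have he : (2:ℝ) ^ (d + 3) * u = Real.sqrt d * (3 * r) := by
      rw [hu_def]; field_simp
    rw [he]
    exact closedBall_subset_cube hd x (3 * r)
  have h2 : cube d x u ⊆ closedBall x r := by
    refine (cube_subset_closedBall hd x hu.le).trans (closedBall_subset_closedBall ?_)
    rw [hu_def, div_le_iff₀ (by positivity)]
    have h3 : Real.sqrt d ≤ 2 ^ d := sqrtd_le_pow
    have h4 : (2:ℝ) ^ (d + 3) = 8 * 2 ^ d := by rw [pow_add]; ring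
    nlinarith [pow_pos (show (0:ℝ) < 2 by norm_num) d]
  calc mw W (closedBall x (3 * r)) ≤ mw W (cube d x (2 ^ (d + 3) * u)) := measure_mono h1
    _ ≤ (ENNReal.ofReal Cv) ^ (d + 3) * mw W (cube d x u) :=
        mw_doub hd hW hWv hloc hCv hdoub x (d + 3) hu
    _ ≤ (ENNReal.ofReal Cv) ^ (d + 3) * mw W (closedBall x r) :=
        mul_le_mul_right (measure_mono h2) _

/-- The corner of a dyadic subcube, as a point. -/
def cnr (a : EuclideanSpace ℝ (Fin d)) (L : ℝ) (k : ℕ) (m : Fin d → ℕ) :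
    EuclideanSpace ℝ (Fin d) :=
  WithLp.toLp 2 fun i => a i + (m i : ℝ) * (L / 2 ^ k)

lemma D_eq_box_cnr (a : EuclideanSpace ℝ (Fin d)) (L : ℝ) (k : ℕ) (m : Fin d → ℕ) :
    D a L k m = box (cnr a L k m) (L / 2 ^ k) := rfl

/-- The Vitali family associated to the doubling measure `mw W`. -/
def VF (hd : 0 < d) (hW : Measurable W)
    (hWv : ∀ᵐ y ∂(volume : Measure (EuclideanSpace ℝ (Fin d))), (W y : ℝ) = v y)
    (hloc : LocallyIntegrable v volume) (hCv : 0 < Cv)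
    (hdoub : ∀ (x : EuclideanSpace ℝ (Fin d)) (r : ℝ), 0 < r →
      (∫ y in cube d x (2 * r), v y) ≤ Cv * ∫ y in cube d x r, v y) :
    VitaliFamily (mw W) :=
  haveI := mw_locallyFinite hW hWv hloc
  Vitali.vitaliFamily (mw W) (Real.toNNReal Cv ^ (d + 3)) (by
    intro x
    apply Eventually.frequently
    filter_upwards [self_mem_nhdsWithin] with r hr
    have h := mw_vitali_doub hd hW hWv hloc hCv hdoub x (hr : (0:ℝ) < r)
    have hc : ((Real.toNNReal Cv ^ (d + 3) : ℝ≥0) : ℝ≥0∞) = (ENNReal.ofReal Cv) ^ (d + 3) := by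
      rw [ENNReal.coe_pow]; rfl
    rw [hc]
    exact h)

lemma cbox_subset_closedBall (hd : 0 < d) {b : EuclideanSpace ℝ (Fin d)} {s : ℝ}
    {y : EuclideanSpace ℝ (Fin d)} (hs : 0 < s) (hy : y ∈ box b s) :
    cbox b s ⊆ closedBall y (Real.sqrt d * s) := by
  have hsub : cbox b s ⊆ cube d y (Real.sqrt d * s) := by
    intro z hz i
    have hz' := (mem_cbox hd).1 hz i
    have hy' := hy i
    rw [sqrt_d_half_div hd, abs_le]
    constructor <;> [linarith [hz'.1, hy'.2]; linarith [hz'.2, hy'.1]]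
  exact hsub.trans (cube_subset_closedBall hd y (by positivity))

lemma cbox_mem_setsAt (hd : 0 < d) (hW : Measurable W)
    (hWv : ∀ᵐ y ∂(volume : Measure (EuclideanSpace ℝ (Fin d))), (W y : ℝ) = v y)
    (hloc : LocallyIntegrable v volume) (hCv : 0 < Cv)
    (hdoub : ∀ (x : EuclideanSpace ℝ (Fin d)) (r : ℝ), 0 < r →
      (∫ y in cube d x (2 * r), v y) ≤ Cv * ∫ y in cube d x r, v y)
    {b : EuclideanSpace ℝ (Fin d)} {s : ℝ} (hs : 0 < s)
    {y : EuclideanSpace ℝ (Fin d)} (hy : y ∈ box b s) :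
    cbox b s ∈ (VF hd hW hWv hloc hCv hdoub).setsAt y := by
  have hd0 : (0:ℝ) < Real.sqrt d := Real.sqrt_pos.2 (by exact_mod_cast hd)
  have hdd : Real.sqrt d * Real.sqrt d = (d:ℝ) := Real.mul_self_sqrt (by positivity)
  have hd1 : (1:ℝ) ≤ Real.sqrt d := by
    rw [show (1:ℝ) = Real.sqrt 1 from (Real.sqrt_one).symm]
    exact Real.sqrt_le_sqrt (by exact_mod_cast hd)
  have hyc : ∀ i, |y i - ctr b s i| ≤ s / 2 := by
    intro i
    have h := hy i
    simp only [ctr, PiLp.toLp_apply]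
    rw [abs_le]
    constructor <;> [linarith [h.1]; linarith [h.2]]
  have hball : ball (ctr b s) (s / 2) ⊆ cbox b s := by
    intro z hz
    rw [mem_cbox hd]
    intro i
    have h1 : |z i - ctr b s i| ≤ dist z (ctr b s) := abs_sub_apply_le_dist _ _ i
    have h2 : |z i - (b i + s / 2)| < s / 2 := lt_of_le_of_lt h1 (mem_ball.1 hz)
    have := abs_lt.1 h2
    constructor <;> [linarith [this.1]; linarith [this.2]]
  have hint : (interior (cbox b s)).Nonempty :=
    ⟨ctr b s, (isOpen_ball.subset_interior_iff.2 hball) (mem_ball_self (by positivity))⟩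
  refine ⟨isClosed_cube _ _, hint, Real.sqrt d * s,
    cbox_subset_closedBall hd hs hy, ?_⟩
  · -- doubling bound
    have h1 : closedBall y (3 * (Real.sqrt d * s))
        ⊆ cube d y (Real.sqrt d * (3 * (Real.sqrt d * s))) :=
      closedBall_subset_cube hd y _
    have h2 : cube d y (Real.sqrt d * (3 * (Real.sqrt d * s)))
        ⊆ cube d (ctr b s) (Real.sqrt d * (3 * (Real.sqrt d * s)) + Real.sqrt d * (s / 2)) :=
      cube_subset_cube_of_center hd hyc
    have h3 : cube d (ctr b s) (Real.sqrt d * (3 * (Real.sqrt d * s)) + Real.sqrt d * (s / 2))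
        ⊆ cube d (ctr b s) (2 ^ (d + 3) * (Real.sqrt d * (s / 2))) := by
      apply cube_mono hd
      have hsp : Real.sqrt d ≤ 2 ^ d := sqrtd_le_pow
      have h4 : (2:ℝ) ^ (d + 3) = 8 * 2 ^ d := by rw [pow_add]; ring
      have hds : (d:ℝ) ≤ 2 ^ d * Real.sqrt d := by nlinarith
      have hX1 : (1:ℝ) ≤ 2 ^ d := one_le_pow₀ (by norm_num)
      have k1 : 3 * (d:ℝ) * s ≤ 3 * (2 ^ d * Real.sqrt d) * s :=
        mul_le_mul_of_nonneg_right (by linarith) hs.le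
      have k2 : Real.sqrt d * (s / 2) ≤ 2 ^ d * (Real.sqrt d * (s / 2)) := by
        nlinarith [mul_nonneg (mul_nonneg (sub_nonneg.2 hX1) hd0.le)
          (by linarith : (0:ℝ) ≤ s / 2)]
      have e1 : Real.sqrt d * (3 * (Real.sqrt d * s)) = 3 * (d:ℝ) * s := by
        linear_combination (3 * s) * hdd
      rw [e1, h4]
      nlinarith [k1, k2, mul_pos (pow_pos (show (0:ℝ) < 2 by norm_num) d) (mul_pos hd0 hs)]
    have h5 := mw_doub hd hW hWv hloc hCv hdoub (ctr b s) (d + 3)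
      (r := Real.sqrt d * (s / 2)) (by positivity)
    have hceq : cube d (ctr b s) (Real.sqrt d * (s / 2)) = cbox b s := rfl
    have hc : ((Real.toNNReal Cv ^ (d + 3) : ℝ≥0) : ℝ≥0∞) = (ENNReal.ofReal Cv) ^ (d + 3) := by
      rw [ENNReal.coe_pow]; rfl
    calc mw W (closedBall y (3 * (Real.sqrt d * s)))
        ≤ mw W (cube d (ctr b s) (2 ^ (d + 3) * (Real.sqrt d * (s / 2)))) :=
          measure_mono ((h1.trans h2).trans h3)
      _ ≤ (ENNReal.ofReal Cv) ^ (d + 3) * mw W (cube d (ctr b s) (Real.sqrt d * (s / 2))) := h5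
      _ = (Real.toNNReal Cv ^ (d + 3) : ℝ≥0) * mw W (cbox b s) := by rw [hceq, hc]

lemma ae_tendsto_cbox_avg (hd : 0 < d) (hW : Measurable W)
    (hWv : ∀ᵐ y ∂(volume : Measure (EuclideanSpace ℝ (Fin d))), (W y : ℝ) = v y)
    (hloc : LocallyIntegrable v volume)
    (hpos : ∀ᵐ x ∂(volume : Measure (EuclideanSpace ℝ (Fin d))), 0 < v x)
    (hCv : 0 < Cv)
    (hdoub : ∀ (x : EuclideanSpace ℝ (Fin d)) (r : ℝ), 0 < r →
      (∫ y in cube d x (2 * r), v y) ≤ Cv * ∫ y in cube d x r, v y)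
    (a : EuclideanSpace ℝ (Fin d)) {L : ℝ} (hL : 0 < L)
    {F : EuclideanSpace ℝ (Fin d) → ℝ} (hF : LocallyIntegrable F (mw W)) :
    ∀ᵐ y ∂(volume : Measure (EuclideanSpace ℝ (Fin d))), y ∈ box a L →
      Tendsto (fun k : ℕ => ⨍ z in cbox (cnr a L k (idx a L k y)) (L / 2 ^ k), F z ∂(mw W))
        atTop (𝓝 (F y)) := by
  haveI := mw_locallyFinite hW hWv hloc
  have hae := (VF hd hW hWv hloc hCv hdoub).ae_tendsto_average hF
  have hae' := (ae_withDensity_iff hW.coe_nnreal_ennreal).1 hae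
  filter_upwards [hae', hWv, hpos] with y h1 h2 h3
  intro hy
  have hWy : (W y : ℝ≥0∞) ≠ 0 := by
    simp only [ne_eq, ENNReal.coe_eq_zero]
    intro h0
    rw [h0] at h2
    simp only [NNReal.coe_zero] at h2
    linarith
  have htd := h1 hWy
  refine htd.comp ?_
  rw [VitaliFamily.tendsto_filterAt_iff]
  constructor
  · refine Eventually.of_forall fun k => ?_
    exact cbox_mem_setsAt hd hW hWv hloc hCv hdoub (by positivity)
      (mem_D_idx a hL hy : y ∈ D a L k _)
  · intro ε hε
    have hto : Tendsto (fun k : ℕ => Real.sqrt d * L * (1/2 : ℝ) ^ k) atTop (𝓝 0) := by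
      have h0 := tendsto_pow_atTop_nhds_zero_of_lt_one
        (by norm_num : (0:ℝ) ≤ 1/2) (by norm_num : (1/2 : ℝ) < 1)
      simpa using h0.const_mul (Real.sqrt d * L)
    filter_upwards [hto.eventually (gt_mem_nhds hε)] with k hk
    have he : Real.sqrt d * (L / 2 ^ k) = Real.sqrt d * L * (1/2 : ℝ) ^ k := by
      rw [div_pow]; ring
    refine (cbox_subset_closedBall hd (by positivity)
      (mem_D_idx a hL hy : y ∈ D a L k _)).trans (closedBall_subset_closedBall ?_)
    rw [he]
    exact hk.le

end Density

end CZaux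

open Metric Set Filter CZaux
open scoped ENNReal NNReal Topology

/-- Calderón–Zygmund decomposition of `f` on a cube `R` with respect
to a doubling weight `v` at height `t > (1/v(R))∫_R |f| v`. -/
theorem calderon_zygmund_decomposition {d : ℕ}
    (a : EuclideanSpace ℝ (Fin d)) (L : ℝ) (hL : 0 < L)
    (v : EuclideanSpace ℝ (Fin d) → ℝ) (hv : IsWeight v)
    (Cv : ℝ) (hCv : 0 < Cv) (hdoub : IsDoubling v Cv) :
    ∃ C > 0, ∃ γ > 1,
      ∀ f : EuclideanSpace ℝ (Fin d) → ℝ,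
        IntegrableOn (fun y => f y * v y) (box a L) volume →
        ∀ t : ℝ,
          ((∫ y in box a L, v y)⁻¹ * ∫ y in box a L, |f y| * v y) < t →
          ∃ (ι : Type) (_ : Countable ι) (P : ι → Set (EuclideanSpace ℝ (Fin d)))
            (g : EuclideanSpace ℝ (Fin d) → ℝ)
            (h : ι → EuclideanSpace ℝ (Fin d) → ℝ),
            (∀ i, IsDyadicSubcube a L (P i)) ∧
            (∀ i j, i ≠ j → Disjoint (P i) (P j)) ∧
            (∀ᵐ y ∂(volume.restrict (box a L)), f y = g y + ∑' i, h i y) ∧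
            (∀ᵐ y ∂(volume.restrict (box a L)), |g y| ≤ C * t) ∧
            (∀ i, ∀ y, y ∉ P i → h i y = 0) ∧
            (∀ i, (∫ y in P i, h i y * v y) = 0) ∧
            (∀ i, t ≤ (∫ y in P i, v y)⁻¹ * ∫ y in P i, |f y| * v y ∧
              (∫ y in P i, v y)⁻¹ * (∫ y in P i, |f y| * v y) ≤ γ * t) ∧
            (∀ᵐ y ∂(volume.restrict (box a L \ ⋃ i, P i)), |f y| ≤ t) := by
  obtain ⟨hloc, hpos⟩ := hv
  have hdoub' : ∀ (x : EuclideanSpace ℝ (Fin d)) (r : ℝ), 0 < r →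
      (∫ y in cube d x (2 * r), v y) ≤ Cv * ∫ y in cube d x r, v y := hdoub
  refine ⟨Cv ^ 2 + 1, by positivity, Cv ^ 2 + 1, by nlinarith, ?_⟩
  intro f hf t ht
  have hint_nonneg : ∀ s : Set (EuclideanSpace ℝ (Fin d)),
      0 ≤ ∫ y in s, |f y| * v y := fun s =>
    integral_nonneg_of_ae (ae_restrict_of_ae
      (hpos.mono fun y hy => mul_nonneg (abs_nonneg _) hy.le))
  have hAvg0 : 0 ≤ (∫ y in box a L, v y)⁻¹ * ∫ y in box a L, |f y| * v y :=
    mul_nonneg (inv_nonneg.2 (setIntegral_v_nonneg hpos _)) (hint_nonneg _)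
  have ht0 : 0 < t := lt_of_le_of_lt hAvg0 ht
  rcases Nat.eq_zero_or_pos d with hd0 | hd
  · -- trivial zero-dimensional case
    subst hd0
    haveI : Subsingleton (EuclideanSpace ℝ (Fin 0)) := ⟨fun x y => by ext i; exact i.elim0⟩
    have hbox : box a L = Set.univ := Set.eq_univ_of_forall fun y i => i.elim0
    have hbnd : Bornology.IsBounded (box a L) := by
      rw [hbox]
      refine (isBounded_closedBall (x := a) (r := 1)).subset fun y _ => ?_
      simp [Subsingleton.elim y a]
    have hvol : 0 < volume (box a L) := by
      rw [hbox]
      exact isOpen_univ.measure_pos volume ⟨a, trivial⟩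
    have hvpos : 0 < ∫ z in box a L, v z :=
      setIntegral_v_pos hloc hpos (measurableSet_box a L) hbnd hvol
    have hft : ∀ y, |f y| ≤ t := by
      intro y
      have hI : (∫ z in box a L, |f z| * v z) = |f y| * ∫ z in box a L, v z := by
        rw [← integral_const_mul]
        exact integral_congr_ae (Eventually.of_forall fun z => by
          rw [Subsingleton.elim z y])
      have h2 : (∫ z in box a L, v z)⁻¹ * (|f y| * ∫ z in box a L, v z) = |f y| := by
        field_simp
      rw [hI, h2] at ht
      exact ht.le
    refine ⟨Empty, inferInstance, fun i => i.elim, f, fun i => i.elim,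
      fun i => i.elim, fun i => i.elim, ?_, ?_, fun i => i.elim, fun i => i.elim,
      fun i => i.elim, ?_⟩
    · exact Eventually.of_forall fun y => by simp [tsum_empty]
    · refine Eventually.of_forall fun y => (hft y).trans ?_
      nlinarith
    · exact Eventually.of_forall fun y => hft y
  · -- main case
    -- measurable version of the weight
    obtain ⟨v', hv'meas, hveq⟩ := hloc.aestronglyMeasurable.aemeasurable
    set W : EuclideanSpace ℝ (Fin d) → ℝ≥0 := fun y => Real.toNNReal (v' y) with hW_def
    have hWmeas : Measurable W := measurable_real_toNNReal.comp hv'meas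
    have hWv : ∀ᵐ y ∂(volume : Measure (EuclideanSpace ℝ (Fin d))), (W y : ℝ) = v y := by
      filter_upwards [hveq, hpos] with y h1 h2
      rw [hW_def]
      simp only
      rw [Real.coe_toNNReal _ (by rw [← h1]; exact h2.le)]
      exact h1.symm
    -- basic facts about dyadic cubes
    have hDmeas : ∀ (k : ℕ) (m : Fin d → ℕ), MeasurableSet (D a L k m) :=
      fun k m => measurableSet_box _ _
    have hDbnd : ∀ (k : ℕ) (m : Fin d → ℕ), Bornology.IsBounded (D a L k m) :=
      fun k m => isBounded_box hd _ _
    have hvD : ∀ (k : ℕ) (m : Fin d → ℕ), 0 < ∫ y in D a L k m, v y := fun k m =>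
      setIntegral_v_pos hloc hpos (hDmeas k m) (hDbnd k m)
        (volume_box_pos hd _ (by positivity))
    have habsI : IntegrableOn (fun y => |f y| * v y) (box a L) volume :=
      hf.abs.congr (ae_restrict_of_ae (hpos.mono fun y hy => by
        show |f y * v y| = |f y| * v y
        rw [abs_mul, abs_of_pos hy]))
    -- the weighted average of |f|
    set Avg : Set (EuclideanSpace ℝ (Fin d)) → ℝ :=
      fun s => (∫ y in s, v y)⁻¹ * ∫ y in s, |f y| * v y with hAvg_def
    -- the selected (maximal bad) cubes
    set Sel : ℕ × (Fin d → ℕ) → Prop := fun p =>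
      (∀ i, p.2 i < 2 ^ p.1) ∧ t < Avg (D a L p.1 p.2) ∧
        ∀ j, j < p.1 → ¬ t < Avg (D a L j (fun i => p.2 i / 2 ^ (p.1 - j))) with hSel_def
    have hroot : ¬ t < Avg (box a L) := not_lt.2 ht.le
    have hD0 : ∀ m : Fin d → ℕ, (∀ i, m i < 2 ^ 0) → D a L 0 m = box a L := by
      intro m hm
      have hm0 : m = fun _ => 0 := funext fun i => by have := hm i; omega
      subst hm0
      show box _ _ = box a L
      have h1 : (WithLp.toLp 2 fun i => a i + (((fun _ : Fin d => 0) i : ℕ) : ℝ) * (L / 2 ^ 0)) = a := by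
        ext i; simp
      rw [h1]
      norm_num
    have hSel_pos : ∀ p, Sel p → 0 < p.1 := by
      rintro ⟨k, m⟩ hp
      rcases Nat.eq_zero_or_pos k with rfl | h
      · exact absurd (by rw [← hD0 m hp.1]; exact hp.2.1) hroot
      · exact h
    have hSel_upper : ∀ p, Sel p → Avg (D a L p.1 p.2) ≤ Cv ^ 2 * t := by
      rintro ⟨k, m⟩ hp
      obtain ⟨k', rfl⟩ : ∃ k', k = k' + 1 := ⟨k - 1, by have := hSel_pos _ hp; omega⟩
      have hpar_bad := hp.2.2 k' (by omega)
      have hps : (k' + 1) - k' = 1 := by omega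
      rw [hps, pow_one] at hpar_bad
      have hpavg : Avg (D a L k' (fun i => m i / 2)) ≤ t := not_lt.1 hpar_bad
      have hparent_sub : D a L k' (fun i => m i / 2) ⊆ box a L := by
        apply D_subset_box a hL
        intro i
        have h1 : m i < 2 ^ (k' + 1) := hp.1 i
        rw [Nat.div_lt_iff_lt_mul (by norm_num)]
        rw [pow_succ] at h1
        exact h1
      have hIC_le : (∫ y in D a L (k'+1) m, |f y| * v y)
          ≤ ∫ y in D a L k' (fun i => m i / 2), |f y| * v y :=
        setIntegral_mono_set (habsI.mono_set hparent_sub)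
          (ae_restrict_of_ae (hpos.mono fun y hy => mul_nonneg (abs_nonneg _) hy.le))
          (HasSubset.Subset.eventuallyLE (D_halfparent a hL k' m))
      have hvpar : 0 < ∫ y in D a L k' (fun i => m i / 2), v y := hvD k' _
      have hIpar_eq : (∫ y in D a L k' (fun i => m i / 2), |f y| * v y)
          = Avg (D a L k' (fun i => m i / 2)) * ∫ y in D a L k' (fun i => m i / 2), v y := by
        rw [hAvg_def]
        field_simp
      have hvpar_le := parent_le hd a hL hloc hpos hCv hdoub' k' m
      have h1 : (∫ y in D a L (k'+1) m, |f y| * v y)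
          ≤ t * (Cv ^ 2 * ∫ y in D a L (k'+1) m, v y) :=
        calc (∫ y in D a L (k'+1) m, |f y| * v y)
            ≤ Avg (D a L k' (fun i => m i / 2)) * ∫ y in D a L k' (fun i => m i / 2), v y :=
              hIC_le.trans_eq hIpar_eq
          _ ≤ t * ∫ y in D a L k' (fun i => m i / 2), v y :=
              mul_le_mul_of_nonneg_right hpavg hvpar.le
          _ ≤ t * (Cv ^ 2 * ∫ y in D a L (k'+1) m, v y) :=
              mul_le_mul_of_nonneg_left hvpar_le ht0.le
      have hvC := hvD (k'+1) m
      show (∫ y in D a L (k'+1) m, v y)⁻¹ * (∫ y in D a L (k'+1) m, |f y| * v y) ≤ Cv ^ 2 * t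
      have h2 : (∫ y in D a L (k'+1) m, v y)⁻¹
            * (t * (Cv ^ 2 * ∫ y in D a L (k'+1) m, v y)) = Cv ^ 2 * t := by
        field_simp
      calc (∫ y in D a L (k'+1) m, v y)⁻¹ * (∫ y in D a L (k'+1) m, |f y| * v y)
          ≤ (∫ y in D a L (k'+1) m, v y)⁻¹
            * (t * (Cv ^ 2 * ∫ y in D a L (k'+1) m, v y)) :=
            mul_le_mul_of_nonneg_left h1 (inv_nonneg.2 hvC.le)
        _ = Cv ^ 2 * t := h2
    -- the index type
    classical
    -- pairwise disjointness of selected cubes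
    set P : {p : ℕ × (Fin d → ℕ) // Sel p} → Set (EuclideanSpace ℝ (Fin d)) :=
      fun p => D a L p.1.1 p.1.2 with hP_def
    have hkey : ∀ p q : {p // Sel p}, p.1.1 ≤ q.1.1 → ¬ Disjoint (P p) (P q) → p = q := by
      intro p q hle hnd
      obtain ⟨y, hyp, hyq⟩ := Set.not_disjoint_iff.1 hnd
      have h1 : y ∈ D a L p.1.1 (fun i => q.1.2 i / 2 ^ (q.1.1 - p.1.1)) :=
        D_anc a hL hle _ hyq
      have heq : (fun i => q.1.2 i / 2 ^ (q.1.1 - p.1.1)) = p.1.2 :=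
        D_eq_of_mem a hL h1 hyp
      rcases eq_or_lt_of_le hle with he | hlt
      · have h0 : q.1.1 - p.1.1 = 0 := by omega
        rw [h0] at heq
        simp only [pow_zero, Nat.div_one] at heq
        exact Subtype.ext (Prod.ext he heq.symm)
      · exfalso
        have h2 := q.2.2.2 p.1.1 hlt
        rw [heq] at h2
        exact h2 p.2.2.1
    have hdisj : ∀ p q : {p // Sel p}, p ≠ q → Disjoint (P p) (P q) := by
      intro p q hne
      by_contra hnd
      rcases le_total p.1.1 q.1.1 with hle | hle
      · exact hne (hkey p q hle hnd)
      · exact hne (hkey q p hle (fun hD => hnd hD.symm)).symm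
    have hPsub : ∀ p : {p // Sel p}, P p ⊆ box a L :=
      fun p => D_subset_box a hL p.2.1
    -- any point lying in a bad cube lies in a selected cube
    have hsel_of_bad : ∀ y ∈ box a L, ∀ k, t < Avg (D a L k (idx a L k y)) →
        ∃ p : {p // Sel p}, y ∈ P p := by
      intro y hy k hbad
      have hex : ∃ j, t < Avg (D a L j (idx a L j y)) := ⟨k, hbad⟩
      have hsel : Sel (Nat.find hex, idx a L (Nat.find hex) y) := by
        refine ⟨fun i => idx_lt a hL hy i, Nat.find_spec hex, ?_⟩
        intro j hj
        have h2 := idx_anc a hL (le_of_lt hj) hy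
        rw [h2]
        exact Nat.find_min hex hj
      exact ⟨⟨(Nat.find hex, idx a L (Nat.find hex) y), hsel⟩, mem_D_idx a hL hy⟩
    -- the localized function |f| on the box
    set F : EuclideanSpace ℝ (Fin d) → ℝ := (box a L).indicator (fun y => |f y|) with hF_def
    have hFloc : LocallyIntegrable F (mw W) := by
      rw [locallyIntegrable_iff]
      intro K hK
      rw [IntegrableOn, mw, restrict_withDensity hK.measurableSet,
        integrable_withDensity_iff_integrable_smul hWmeas]
      have hgI : Integrable ((box a L).indicator (fun y => |f y| * v y))
          (volume.restrict K) := by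
        rw [integrable_indicator_iff (measurableSet_box a L), IntegrableOn,
          Measure.restrict_restrict (measurableSet_box a L)]
        exact habsI.mono_set inter_subset_left
      refine hgI.congr ?_
      apply ae_restrict_of_ae
      filter_upwards [hWv] with y hWy
      by_cases hyb : y ∈ box a L
      · rw [hF_def]
        simp only [indicator_of_mem hyb, NNReal.smul_def, smul_eq_mul]
        rw [hWy]; ring
      · rw [hF_def]
        simp [indicator_of_notMem hyb]
    have hdiff := ae_tendsto_cbox_avg hd hWmeas hWv hloc hpos hCv hdoub' a hL hFloc
    -- the average over a closed dyadic cube equals the weighted average of |f|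
    have havg_eq : ∀ (k : ℕ) (m : Fin d → ℕ), (∀ i, m i < 2 ^ k) →
        (⨍ z in cbox (cnr a L k m) (L / 2 ^ k), F z ∂(mw W)) = Avg (D a L k m) := by
      intro k m hm
      have hsub : D a L k m ⊆ box a L := D_subset_box a hL hm
      have hae : (box (cnr a L k m) (L / 2 ^ k) : Set _)
          =ᵐ[volume] cbox (cnr a L k m) (L / 2 ^ k) := box_ae_eq_cbox hd _ _
      have hcube_meas : MeasurableSet (cbox (cnr a L k m) (L / 2 ^ k)) :=
        measurableSet_cube _ _
      have hcube_bnd : Bornology.IsBounded (cbox (cnr a L k m) (L / 2 ^ k)) :=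
        isBounded_cube hd _ _
      have hμ : mw W (cbox (cnr a L k m) (L / 2 ^ k))
          = ENNReal.ofReal (∫ y in D a L k m, v y) := by
        rw [mw_apply hWmeas hWv hloc hcube_meas hcube_bnd]
        congr 1
        rw [D_eq_box_cnr]
        exact (setIntegral_congr_set hae).symm
      have hI : (∫ z in cbox (cnr a L k m) (L / 2 ^ k), F z ∂(mw W))
          = ∫ y in D a L k m, |f y| * v y := by
        rw [mw, setIntegral_withDensity_eq_setIntegral_smul hWmeas _ hcube_meas,
          ← setIntegral_congr_set hae]
        rw [D_eq_box_cnr a L k m]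
        apply setIntegral_congr_ae (measurableSet_box _ _)
        filter_upwards [hWv] with y hWy
        intro hyD
        rw [hF_def]
        have hyb : y ∈ box a L := hsub hyD
        simp only [indicator_of_mem hyb, NNReal.smul_def, smul_eq_mul]
        rw [hWy]; ring
      rw [setAverage_eq, measureReal_def, hμ, hI, ENNReal.toReal_ofReal (setIntegral_v_nonneg hpos _)]
      rw [smul_eq_mul]
    -- almost everywhere on the good region, |f| ≤ t
    have hgood : ∀ᵐ y ∂(volume : Measure (EuclideanSpace ℝ (Fin d))), y ∈ box a L →
        y ∉ (⋃ p : {p // Sel p}, P p) → |f y| ≤ t := by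
      filter_upwards [hdiff] with y hy
      intro hyb hyout
      have htd := hy hyb
      have hub : ∀ k : ℕ,
          (⨍ z in cbox (cnr a L k (idx a L k y)) (L / 2 ^ k), F z ∂(mw W)) ≤ t := by
        intro k
        rw [havg_eq k _ (fun i => idx_lt a hL hyb i)]
        by_contra hbad
        push_neg at hbad
        obtain ⟨p, hp⟩ := hsel_of_bad y hyb k hbad
        exact hyout (mem_iUnion.2 ⟨p, hp⟩)
      have hlim : F y ≤ t := le_of_tendsto htd (Eventually.of_forall hub)
      rwa [hF_def, indicator_of_mem hyb] at hlim
    -- the constants and pieces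
    set bb : {p // Sel p} → ℝ := fun p =>
      (∫ y in P p, v y)⁻¹ * ∫ y in P p, f y * v y with hbb_def
    set hh : {p // Sel p} → EuclideanSpace ℝ (Fin d) → ℝ :=
      fun p => (P p).indicator (fun y => f y - bb p) with hhh_def
    have hbb_abs : ∀ p, |bb p| ≤ Cv ^ 2 * t := by
      intro p
      have hvP : 0 < ∫ y in P p, v y := hvD p.1.1 p.1.2
      have h1 : |bb p| ≤ Avg (P p) := by
        rw [hbb_def, hAvg_def]
        simp only
        rw [abs_mul, abs_inv, abs_of_pos hvP]
        apply mul_le_mul_of_nonneg_left ?_ (inv_nonneg.2 hvP.le)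
        calc |∫ y in P p, f y * v y| ≤ ∫ y in P p, |f y * v y| := by
              have h8 := norm_integral_le_integral_norm
                (μ := volume.restrict (P p)) (fun y => f y * v y)
              simpa only [Real.norm_eq_abs] using h8
          _ = ∫ y in P p, |f y| * v y := by
              apply setIntegral_congr_ae (hDmeas p.1.1 p.1.2)
              filter_upwards [hpos] with y hy
              intro _
              rw [abs_mul, abs_of_pos hy]
      exact h1.trans (hSel_upper p.1 p.2)
    -- the summands evaluated pointwise
    have htsum_mem : ∀ (p : {p // Sel p}) (y : EuclideanSpace ℝ (Fin d)), y ∈ P p →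
        (∑' q, hh q y) = f y - bb p := by
      intro p y hy
      have h1 : (∑' q, hh q y) = hh p y := by
        apply tsum_eq_single
        intro q hq
        have hdq : Disjoint (P q) (P p) := hdisj q p hq
        have h2 : y ∉ P q := fun hyq => (Set.disjoint_left.1 hdq hyq) hy
        rw [hhh_def]
        simp only
        exact indicator_of_notMem h2 _
      rw [h1, hhh_def]
      simp only
      rw [indicator_of_mem hy]
    have htsum_out : ∀ y : EuclideanSpace ℝ (Fin d), (∀ q, y ∉ P q) →
        (∑' q, hh q y) = 0 := by
      intro y hy
      have h1 : ∀ q : {p // Sel p}, hh q y = 0 := fun q => by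
        rw [hhh_def]; simp only; exact indicator_of_notMem (hy q) _
      rw [tsum_congr h1, tsum_zero]
    have hPmeas : ∀ p : {p // Sel p}, MeasurableSet (P p) :=
      fun p => hDmeas p.1.1 p.1.2
    have hbound7 : ∀ p : {p // Sel p},
        t ≤ (∫ y in P p, v y)⁻¹ * ∫ y in P p, |f y| * v y ∧
        (∫ y in P p, v y)⁻¹ * (∫ y in P p, |f y| * v y) ≤ (Cv ^ 2 + 1) * t := by
      intro p
      have h6 := hSel_upper p.1 p.2
      have h5 := p.2.2.1
      have h7 : Avg (D a L p.1.1 p.1.2)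
          = (∫ y in P p, v y)⁻¹ * ∫ y in P p, |f y| * v y := by
        simp only [hAvg_def, hP_def]
      rw [h7] at h6 h5
      exact ⟨h5.le, by nlinarith⟩
    -- assemble the decomposition
    refine ⟨{p : ℕ × (Fin d → ℕ) // Sel p}, inferInstance, P,
      (fun y => f y - ∑' p, hh p y), hh,
      (fun p => ⟨p.1.1, p.1.2, p.2.1, rfl⟩), hdisj, ?_, ?_, ?_, ?_, ?_, ?_⟩
    · exact Eventually.of_forall fun y => by ring
    · rw [ae_restrict_iff' (measurableSet_box a L)]
      filter_upwards [hgood] with y hg hyb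
      by_cases hmem : ∃ p : {p // Sel p}, y ∈ P p
      · obtain ⟨p, hp⟩ := hmem
        rw [htsum_mem p y hp]
        have h1 : f y - (f y - bb p) = bb p := by ring
        rw [h1]
        have h2 := hbb_abs p
        nlinarith
      · push_neg at hmem
        rw [htsum_out y hmem, sub_zero]
        have h3 : y ∉ ⋃ p : {p // Sel p}, P p := by
          intro hyu
          obtain ⟨p, hp⟩ := mem_iUnion.1 hyu
          exact hmem p hp
        have h4 := hg hyb h3
        nlinarith
    · intro p y hy
      rw [hhh_def]
      simp only
      exact indicator_of_notMem hy _
    · intro p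
      have hfvI : IntegrableOn (fun y => f y * v y) (P p) volume :=
        hf.mono_set (hPsub p)
      have hvIp : IntegrableOn v (P p) volume :=
        integrableOn_v hloc _ (hDbnd p.1.1 p.1.2)
      have hvP : 0 < ∫ y in P p, v y := hvD p.1.1 p.1.2
      have hcong : (∫ y in P p, hh p y * v y) = ∫ y in P p, (f y - bb p) * v y := by
        apply setIntegral_congr_fun (hDmeas p.1.1 p.1.2)
        intro y hy
        rw [hhh_def]
        simp only
        rw [indicator_of_mem hy]
      rw [hcong]
      have h5 : (fun y => (f y - bb p) * v y) = fun y => f y * v y - bb p * v y :=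
        funext fun y => by ring
      rw [h5, integral_sub hfvI (hvIp.const_mul (bb p))]
      rw [integral_const_mul, hbb_def]
      simp only
      field_simp
      ring
    · exact hbound7
    · rw [ae_restrict_iff' ((measurableSet_box a L).diff
        (MeasurableSet.iUnion (fun p => hPmeas p)))]
      filter_upwards [hgood] with y hg hyd
      exact hg hyd.1 hyd.2

end
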